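/- Let S = M⁰(G, I) be the Brandt semigroup over a group G with index set I. Then ℓ¹(S) has an ultra central approximate identity if and only if I is finite. -/

import Mathlib

noncomputable section

open scoped Topology Classical

universe u v w

/-- The bidual of a complex normed space. -/
abbrev Bidual (A : Type*) [SeminormedAddCommGroup A] [NormedSpace ℂ A] : Type _ :=
  StrongDual ℂ (StrongDual ℂ A)

section BidualActions

variable {A : Type*} [NonUnitalNormedRing A] [NormedSpace ℂ A]
  [IsScalarTower ℂ A A] [SMulCommClass ℂ A A]

/-- The natural left action of `A` on its bidual (coming from the Arens products, which agree
when one factor lies in `A`): `(bidualLSMul a m) f = m (fun b => f (a * b))`. -/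
def bidualLSMul (a : A) (m : Bidual A) : Bidual A :=
  m.comp ((ContinuousLinearMap.compL ℂ A A ℂ).flip (ContinuousLinearMap.mul ℂ A a))

/-- The natural right action of `A` on its bidual:
`(bidualRSMul m a) f = m (fun b => f (b * a))`. -/
def bidualRSMul (m : Bidual A) (a : A) : Bidual A :=
  m.comp ((ContinuousLinearMap.compL ℂ A A ℂ).flip ((ContinuousLinearMap.mul ℂ A).flip a))

end BidualActions

/-- A Banach algebra `A` has an *ultra central approximate identity* if there is a net
`(e α)` in the bidual `A**` such that `a · e α = e α · a` for all `a ∈ A` and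
`e α · a → a` in norm, `A` being identified with its canonical image in `A**`. -/
def HasUltraCentralApproximateIdentity (A : Type u) [NonUnitalNormedRing A] [NormedSpace ℂ A]
    [IsScalarTower ℂ A A] [SMulCommClass ℂ A A] : Prop :=
  ∃ (ι : Type u) (_ : Preorder ι) (_ : Nonempty ι) (_ : IsDirected ι (· ≤ ·))
    (e : ι → Bidual A),
    (∀ (a : A) (α : ι), bidualLSMul a (e α) = bidualRSMul (e α) a) ∧
    ∀ a : A, Filter.Tendsto (fun α => bidualRSMul (e α) a) Filter.atTop
      (𝓝 (NormedSpace.inclusionInDoubleDual ℂ A a))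

/-- `B`, together with the point masses `δ s` for `s ∈ S`, is (a realization of) the
semigroup algebra `ℓ¹(S)`: the point masses multiply according to `S`, finitely supported
linear combinations of them carry the `ℓ¹`-norm, and they are dense in `B`. -/
structure IsL1SemigroupAlgebra (S : Type v) [Mul S] (B : Type u) [NonUnitalNormedRing B]
    [NormedSpace ℂ B] [IsScalarTower ℂ B B] [SMulCommClass ℂ B B] [CompleteSpace B]
    (δ : S → B) : Prop where
  delta_mul : ∀ s t : S, δ s * δ t = δ (s * t)
  norm_eq : ∀ x : S →₀ ℂ, ‖x.sum fun s c => c • δ s‖ = x.sum fun _ c => ‖c‖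
  dense : DenseRange fun x : S →₀ ℂ => x.sum fun s c => c • δ s

/-- The Brandt semigroup `M⁰(G, I)` over a group `G` with index set `I`:  its elements are
the "elementary matrices" `(g)_{i,j}` (encoded as `some (i, g, j)`) together with a zero
element (encoded as `none`). -/
def Brandt (G : Type*) (I : Type*) : Type _ := Option (I × G × I)

/-- Multiplication of the Brandt semigroup:
`(g)_{i,j} * (h)_{k,l} = (g*h)_{i,l}` if `j = k`, and `0` otherwise. -/
instance brandtMul (G : Type*) [Mul G] (I : Type*) : Mul (Brandt G I) :=
  ⟨fun x y => match x, y with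
    | some (i, g, j), some (k, h, l) => if j = k then some (i, g * h, l) else none
    | _, _ => none⟩

section Aux

variable {S : Type v} [Mul S] {B : Type u} [NonUnitalNormedRing B]
  [NormedSpace ℂ B] [IsScalarTower ℂ B B] [SMulCommClass ℂ B B] [CompleteSpace B]
  {δ : S → B}

lemma IsL1SemigroupAlgebra.ext_delta {W : Type*} [NormedAddCommGroup W] [NormedSpace ℂ W]
    (hδ : IsL1SemigroupAlgebra S B δ) (f g : B →L[ℂ] W) (h : ∀ t, f (δ t) = g (δ t)) :
    f = g := by
  apply ContinuousLinearMap.coeFn_injective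
  refine hδ.dense.equalizer f.continuous g.continuous (funext fun x => ?_)
  simp only [Function.comp_apply, Finsupp.sum, map_sum, map_smul, h]

lemma IsL1SemigroupAlgebra.coord_le (hδ : IsL1SemigroupAlgebra S B δ) (s : S) (x : S →₀ ℂ) :
    ‖x s‖ ≤ ‖x.sum fun t c => c • δ t‖ := by
  rw [hδ.norm_eq]
  by_cases hs : s ∈ x.support
  · exact Finset.single_le_sum (f := fun t => ‖x t‖) (fun t _ => norm_nonneg _) hs
  · simp [Finsupp.notMem_support_iff.mp hs, Finsupp.sum]
    positivity

lemma IsL1SemigroupAlgebra.exists_coord (hδ : IsL1SemigroupAlgebra S B δ) (s : S) :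
    ∃ f : B →L[ℂ] ℂ, (∀ x : S →₀ ℂ, f (x.sum fun t c => c • δ t) = x s) ∧
      ∀ b : B, ‖f b‖ ≤ ‖b‖ := by
  classical
  set T : (S →₀ ℂ) →ₗ[ℂ] B := Finsupp.linearCombination ℂ δ with hT
  have hTapp : ∀ x : S →₀ ℂ, T x = x.sum fun t c => c • δ t := fun x => rfl
  have hinj : Function.Injective T := by
    rw [← LinearMap.ker_eq_bot]
    refine (Submodule.eq_bot_iff _).mpr fun z hz => ?_
    have h0 : ‖T z‖ = 0 := by rw [LinearMap.mem_ker.mp hz, norm_zero]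
    rw [hTapp, hδ.norm_eq] at h0
    ext t
    by_cases ht : t ∈ z.support
    · have := (Finset.sum_eq_zero_iff_of_nonneg (fun t _ => norm_nonneg (z t))).mp h0 t ht
      simpa using this
    · simpa using Finsupp.notMem_support_iff.mp ht
  set M := LinearMap.range T with hM
  set eQ : (S →₀ ℂ) ≃ₗ[ℂ] M := LinearEquiv.ofInjective T hinj with heQ
  set φ : M →ₗ[ℂ] ℂ := (Finsupp.lapply s) ∘ₗ eQ.symm.toLinearMap with hφdef
  have hφ : ∀ x : S →₀ ℂ, φ (eQ x) = x s := by
    intro x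
    simp [hφdef]
  have hcoe : ∀ x : S →₀ ℂ, ((eQ x : M) : B) = T x := fun x =>
    LinearEquiv.ofInjective_apply (f := T) x
  have hbound : ∀ m : M, ‖φ m‖ ≤ ‖m‖ := by
    intro m
    obtain ⟨x, rfl⟩ := eQ.surjective m
    rw [hφ]
    have h1 : ‖(eQ x : M)‖ = ‖((eQ x : M) : B)‖ := rfl
    rw [h1, hcoe, hTapp]
    exact hδ.coord_le s x
  set φc : M →L[ℂ] ℂ := φ.mkContinuous 1 (fun m => by simpa using hbound m) with hφc
  have hrange : Set.range ((M.subtypeL : M →L[ℂ] B)) = Set.range fun x : S →₀ ℂ =>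
      x.sum fun t c => c • δ t := by
    rw [Submodule.coe_subtypeL', Submodule.coe_subtype, Subtype.range_coe_subtype]
    ext b
    simp only [Set.mem_setOf_eq, Set.mem_range]
    constructor
    · rintro hb
      obtain ⟨x, hx⟩ := hb
      exact ⟨x, by rw [← hTapp]; exact hx⟩
    · rintro ⟨x, hx⟩
      exact ⟨x, by rw [hTapp]; exact hx⟩
  have hdense : DenseRange ((M.subtypeL : M →L[ℂ] B)) := by
    rw [DenseRange, hrange]
    exact hδ.dense
  have hui : IsUniformInducing ((M.subtypeL : M →L[ℂ] B)) :=
    isUniformEmbedding_subtype_val.isUniformInducing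
  set F : B →L[ℂ] ℂ := φc.extend M.subtypeL with hF
  have hkey : ∀ x : S →₀ ℂ, F (x.sum fun t c => c • δ t) = x s := by
    intro x
    have h1 : (x.sum fun t c => c • δ t) = M.subtypeL (eQ x) := by
      rw [← hTapp]
      exact (hcoe x).symm
    rw [h1, ContinuousLinearMap.extend_eq _ hdense hui]
    exact hφ x
  refine ⟨F, hkey, ?_⟩
  have hclosed : IsClosed {b : B | ‖F b‖ ≤ ‖b‖} :=
    isClosed_le F.continuous.norm continuous_norm
  exact isClosed_property hδ.dense hclosed fun x => by
    rw [hkey x]; exact hδ.coord_le s x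

end Aux

/-- `(g)_{i,j}` as an element of the Brandt semigroup. -/
def brS {G : Type*} {I : Type*} (i : I) (g : G) (j : I) : Brandt G I := some (i, g, j)

/-- The zero of the Brandt semigroup. -/
def brZ {G : Type*} {I : Type*} : Brandt G I := none

section BrandtAux

variable {G : Type v} [Group G] {I : Type v}

lemma brS_mul_brS (i k : I) (g h : G) (j l : I) :
    brS i g j * brS k h l = (if j = k then brS i (g * h) l else (brZ : Brandt G I)) := rfl

lemma brZ_mul (x : Brandt G I) : brZ * x = (brZ : Brandt G I) := by
  rcases x with _ | ⟨i, g, j⟩ <;> rfl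

lemma mul_brZ (x : Brandt G I) : x * brZ = (brZ : Brandt G I) := by
  rcases x with _ | ⟨i, g, j⟩ <;> rfl

lemma brS_inj : Function.Injective fun i : I => (brS i (1 : G) i : Brandt G I) := by
  intro i j hij
  have : (some (i, (1:G), i) : Option (I × G × I)) = some (j, 1, j) := hij
  simpa [Prod.ext_iff] using this

end BrandtAux

section InclusionAux

variable {A : Type u} [NonUnitalNormedRing A] [NormedSpace ℂ A]
  [IsScalarTower ℂ A A] [SMulCommClass ℂ A A]

lemma bidualLSMul_inclusion (a c : A) :
    bidualLSMul a (NormedSpace.inclusionInDoubleDual ℂ A c) =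
      NormedSpace.inclusionInDoubleDual ℂ A (a * c) := by
  ext f
  simp [bidualLSMul, NormedSpace.dual_def, ContinuousLinearMap.mul_apply']

lemma bidualRSMul_inclusion (a c : A) :
    bidualRSMul (NormedSpace.inclusionInDoubleDual ℂ A c) a =
      NormedSpace.inclusionInDoubleDual ℂ A (c * a) := by
  ext f
  simp [bidualRSMul, NormedSpace.dual_def, ContinuousLinearMap.mul_apply']

end InclusionAux

section Backward

variable {G : Type v} [Group G] {I : Type v}
  {B : Type u} [NonUnitalNormedRing B] [NormedSpace ℂ B] [IsScalarTower ℂ B B]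
  [SMulCommClass ℂ B B] [CompleteSpace B] {δ : Brandt G I → B}

lemma brandt_finite_unit [Finite I]
    (hδ : IsL1SemigroupAlgebra (Brandt G I) B δ) :
    ∃ E : B, ∀ a : B, E * a = a ∧ a * E = a := by
  classical
  cases nonempty_fintype I
  set n : ℂ := (Fintype.card I : ℂ) with hn
  set E : B := (∑ i : I, δ (brS i 1 i)) + (1 - n) • δ brZ with hE
  have hnone : ∀ t : Brandt G I, δ t * δ (brZ : Brandt G I) = δ (brZ : Brandt G I) := by
    intro t
    rw [hδ.delta_mul, mul_brZ]
  have hnone' : ∀ t : Brandt G I, δ (brZ : Brandt G I) * δ t = δ (brZ : Brandt G I) := by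
    intro t
    rw [hδ.delta_mul, brZ_mul]
  have hsumconst : ∀ x : B, (∑ _i : I, x) = n • x := by
    intro x
    rw [Finset.sum_const, hn, Finset.card_univ, Nat.cast_smul_eq_nsmul]
  have hEl : ∀ t, E * δ t = δ t := by
    intro t
    rw [hE, add_mul, Finset.sum_mul, smul_mul_assoc]
    rcases t with _ | ⟨k, h, l⟩
    · show (∑ i : I, δ (brS i 1 i) * δ brZ) + (1 - n) • (δ brZ * δ brZ) = δ brZ
      simp only [hnone, hnone']
      rw [hsumconst, sub_smul, one_smul]
      abel
    · show (∑ i : I, δ (brS i 1 i) * δ (brS k h l)) + (1 - n) • (δ brZ * δ (brS k h l))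
        = δ (brS k h l)
      have hterm : ∀ i : I, δ (brS i (1:G) i) * δ (brS k h l) =
          δ (brZ : Brandt G I) + (if i = k then δ (brS k h l) - δ (brZ : Brandt G I) else 0) := by
        intro i
        rw [hδ.delta_mul, brS_mul_brS]
        by_cases hik : i = k
        · subst hik
          simp [one_mul]
        · simp [hik]
      simp only [hterm, hnone']
      rw [Finset.sum_add_distrib, hsumconst, Finset.sum_ite_eq' Finset.univ k
        (fun _ => δ (brS k h l) - δ (brZ : Brandt G I)), if_pos (Finset.mem_univ k)]
      rw [sub_smul, one_smul]
      abel
  have hEr : ∀ t, δ t * E = δ t := by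
    intro t
    rw [hE, mul_add, Finset.mul_sum, mul_smul_comm]
    rcases t with _ | ⟨k, h, l⟩
    · show (∑ i : I, δ brZ * δ (brS i 1 i)) + (1 - n) • (δ brZ * δ brZ) = δ brZ
      simp only [hnone, hnone']
      rw [hsumconst, sub_smul, one_smul]
      abel
    · show (∑ i : I, δ (brS k h l) * δ (brS i 1 i)) + (1 - n) • (δ (brS k h l) * δ brZ)
        = δ (brS k h l)
      have hterm : ∀ i : I, δ (brS k h l) * δ (brS i (1:G) i) =
          δ (brZ : Brandt G I) + (if i = l then δ (brS k h l) - δ (brZ : Brandt G I) else 0) := by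
        intro i
        rw [hδ.delta_mul, brS_mul_brS]
        by_cases hil : i = l
        · subst hil
          simp [mul_one]
        · rw [if_neg (fun hc => hil hc.symm), if_neg hil, add_zero]
      simp only [hterm, hnone]
      rw [Finset.sum_add_distrib, hsumconst, Finset.sum_ite_eq' Finset.univ l
        (fun _ => δ (brS k h l) - δ (brZ : Brandt G I)), if_pos (Finset.mem_univ l)]
      rw [sub_smul, one_smul]
      abel
  refine ⟨E, fun a => ⟨?_, ?_⟩⟩
  · have h1 : ContinuousLinearMap.mul ℂ B E = ContinuousLinearMap.id ℂ B := by
      refine hδ.ext_delta _ _ fun t => ?_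
      simp [ContinuousLinearMap.mul_apply', hEl t]
    have := ContinuousLinearMap.ext_iff.mp h1 a
    simpa [ContinuousLinearMap.mul_apply'] using this
  · have h1 : (ContinuousLinearMap.mul ℂ B).flip E = ContinuousLinearMap.id ℂ B := by
      refine hδ.ext_delta _ _ fun t => ?_
      simp [ContinuousLinearMap.mul_apply', hEr t]
    have := ContinuousLinearMap.ext_iff.mp h1 a
    simpa [ContinuousLinearMap.mul_apply'] using this

end Backward

section BrandtEq

variable {G : Type v} [Group G] {I : Type v}

lemma brS_eq_brS {i k : I} {g h : G} {j l : I} :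
    (brS i g j : Brandt G I) = brS k h l ↔ i = k ∧ g = h ∧ j = l := by
  constructor
  · intro hx
    have : (some (i, g, j) : Option (I × G × I)) = some (k, h, l) := hx
    simpa [Prod.ext_iff] using this
  · rintro ⟨rfl, rfl, rfl⟩
    rfl

lemma brZ_ne_brS (i : I) (g : G) (j : I) : (brZ : Brandt G I) ≠ brS i g j := by
  intro hx
  exact nomatch (show (none : Option (I × G × I)) = some (i, g, j) from hx)

lemma brS_ne_brZ (i : I) (g : G) (j : I) : (brS i g j : Brandt G I) ≠ brZ := by
  intro hx
  exact nomatch (show (some (i, g, j) : Option (I × G × I)) = none from hx)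

end BrandtEq

section BidualApply

variable {A : Type u} [NonUnitalNormedRing A] [NormedSpace ℂ A]
  [IsScalarTower ℂ A A] [SMulCommClass ℂ A A]

lemma bidualLSMul_apply (a : A) (m : Bidual A) (g : StrongDual ℂ A) :
    bidualLSMul a m g = m (g.comp (ContinuousLinearMap.mul ℂ A a)) := by
  simp [bidualLSMul]

lemma bidualRSMul_apply (a : A) (m : Bidual A) (g : StrongDual ℂ A) :
    bidualRSMul m a g = m (g.comp ((ContinuousLinearMap.mul ℂ A).flip a)) := by
  simp [bidualRSMul]

end BidualApply

section Forward

variable {G : Type v} [Group G] {I : Type v}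
  {B : Type u} [NonUnitalNormedRing B] [NormedSpace ℂ B] [IsScalarTower ℂ B B]
  [SMulCommClass ℂ B B] [CompleteSpace B] {δ : Brandt G I → B}

lemma brandt_forward [Nonempty I] (hδ : IsL1SemigroupAlgebra (Brandt G I) B δ)
    (h : HasUltraCentralApproximateIdentity B) : Finite I := by
  classical
  by_contra hfin
  have hinf : Infinite I := not_finite_iff_infinite.mp hfin
  obtain ⟨ι, _pre, _ne, _dir, e, hcent, happ⟩ := h
  obtain ⟨i₀⟩ := ‹Nonempty I›
  choose f hf1 hf2 using fun s : Brandt G I => hδ.exists_coord s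
  have hfnorm : ∀ s : Brandt G I, ‖f s‖ ≤ 1 :=
    fun s => ContinuousLinearMap.opNorm_le_bound _ zero_le_one
      (fun b => by simpa using hf2 s b)
  have hfδ : ∀ s t : Brandt G I, f s (δ t) = if t = s then 1 else 0 := by
    intro s t
    have h1 : δ t = (Finsupp.single t (1:ℂ)).sum fun u c => c • δ u := by
      rw [Finsupp.sum_single_index] <;> simp
    rw [h1, hf1, Finsupp.single_apply]
  -- composing a coordinate functional with left multiplication by δ (brS i 1 j)
  have hgoodL : ∀ i j : I, (f (brS i (1:G) j)).comp
      (ContinuousLinearMap.mul ℂ B (δ (brS i (1:G) j))) = f (brS j (1:G) j) := by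
    intro i j
    refine hδ.ext_delta _ _ fun t => ?_
    simp only [ContinuousLinearMap.comp_apply, ContinuousLinearMap.mul_apply']
    rw [hδ.delta_mul, hfδ, hfδ]
    rcases t with _ | ⟨k, h, l⟩
    · show (if (brS i (1:G) j * brZ : Brandt G I) = brS i 1 j then (1:ℂ) else 0) =
        (if (brZ : Brandt G I) = brS j 1 j then 1 else 0)
      rw [mul_brZ, if_neg (brZ_ne_brS _ _ _), if_neg (brZ_ne_brS _ _ _)]
    · show (if (brS i (1:G) j * brS k h l : Brandt G I) = brS i 1 j then (1:ℂ) else 0) =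
        (if (brS k h l : Brandt G I) = brS j 1 j then 1 else 0)
      rw [brS_mul_brS]
      by_cases hjk : j = k
      · rw [if_pos hjk]
        by_cases hh : h = 1 <;> by_cases hl : l = j <;>
          simp [brS_eq_brS, hh, hl, ← hjk, one_mul]
      · rw [if_neg hjk, if_neg (brZ_ne_brS _ _ _),
          if_neg (fun hc => hjk ((brS_eq_brS.mp hc).1).symm)]
  -- composing a coordinate functional with right multiplication by δ (brS i 1 j)
  have hgoodR : ∀ i j : I, (f (brS i (1:G) j)).comp
      ((ContinuousLinearMap.mul ℂ B).flip (δ (brS i (1:G) j))) = f (brS i (1:G) i) := by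
    intro i j
    refine hδ.ext_delta _ _ fun t => ?_
    simp only [ContinuousLinearMap.comp_apply, ContinuousLinearMap.flip_apply,
      ContinuousLinearMap.mul_apply']
    rw [hδ.delta_mul, hfδ, hfδ]
    rcases t with _ | ⟨k, h, l⟩
    · show (if (brZ * brS i (1:G) j : Brandt G I) = brS i 1 j then (1:ℂ) else 0) =
        (if (brZ : Brandt G I) = brS i 1 i then 1 else 0)
      rw [brZ_mul, if_neg (brZ_ne_brS _ _ _), if_neg (brZ_ne_brS _ _ _)]
    · show (if (brS k h l * brS i (1:G) j : Brandt G I) = brS i 1 j then (1:ℂ) else 0) =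
        (if (brS k h l : Brandt G I) = brS i 1 i then 1 else 0)
      rw [brS_mul_brS]
      by_cases hli : l = i
      · rw [if_pos hli]
        by_cases hh : h = 1 <;> by_cases hk : k = i <;>
          simp [brS_eq_brS, hh, hk, hli, mul_one]
      · rw [if_neg hli, if_neg (brZ_ne_brS _ _ _),
          if_neg (fun hc => hli (brS_eq_brS.mp hc).2.2)]
  -- pick a good index α
  haveI : (Filter.atTop : Filter ι).NeBot := Filter.atTop_neBot_iff.mpr ⟨_ne, _dir⟩
  set a₀ : B := δ (brS i₀ (1:G) i₀) with ha₀
  obtain ⟨α, hα⟩ := ((Metric.tendsto_nhds (α := Bidual B) (u := fun α => bidualRSMul (e α) a₀)).mp (happ a₀) (1/2) (by norm_num)).exists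
  set γ : ℂ := e α (f (brS i₀ (1:G) i₀)) with hγdef
  -- all diagonal coordinates of e α agree
  have hcenter : ∀ i : I, e α (f (brS i (1:G) i)) = γ := by
    intro i
    have h1 := congrFun (congrArg DFunLike.coe (hcent (δ (brS i₀ (1:G) i)) α))
      (f (brS i₀ (1:G) i))
    rw [bidualLSMul_apply, bidualRSMul_apply, hgoodL i₀ i, hgoodR i₀ i] at h1
    rw [hγdef]
    exact h1
  -- γ is close to 1
  have hγ1 : ‖γ - 1‖ < 1/2 := by
    set D := bidualRSMul (e α) a₀ - NormedSpace.inclusionInDoubleDual ℂ B a₀ with hD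
    have hval : D (f (brS i₀ (1:G) i₀)) = γ - 1 := by
      rw [hD, ContinuousLinearMap.sub_apply, bidualRSMul_apply, hgoodR i₀ i₀,
        NormedSpace.dual_def, ha₀, hfδ, if_pos rfl, hγdef]
    have h2 : ‖D (f (brS i₀ (1:G) i₀))‖ ≤ ‖D‖ * 1 :=
      le_trans (ContinuousLinearMap.le_opNorm _ _)
        (mul_le_mul_of_nonneg_left (hfnorm _) (norm_nonneg _))
    rw [hval, mul_one] at h2
    have h3 : ‖D‖ < 1/2 := by rw [hD, ← dist_eq_norm (E := Bidual B)]; exact hα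
    linarith
  have hγhalf : (1:ℝ)/2 ≤ ‖γ‖ := by
    have h1 : ‖(1:ℂ)‖ - ‖γ‖ ≤ ‖γ - 1‖ := by
      calc ‖(1:ℂ)‖ - ‖γ‖ ≤ ‖(1:ℂ) - γ‖ := norm_sub_norm_le _ _
        _ = ‖γ - 1‖ := by rw [norm_sub_rev]
    rw [norm_one] at h1
    linarith
  -- every finite subset of I is small
  have hbound : ∀ J : Finset I, (J.card : ℝ) * (1/2) ≤ ‖e α‖ := by
    intro J
    set FJ : B →L[ℂ] ℂ := ∑ i ∈ J, f (brS i (1:G) i) with hFJ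
    have hFJnorm : ‖FJ‖ ≤ 1 := by
      refine ContinuousLinearMap.opNorm_le_bound _ zero_le_one fun b => ?_
      rw [one_mul]
      refine isClosed_property hδ.dense
        (isClosed_le FJ.continuous.norm continuous_norm) (fun x => ?_) b
      have happly : FJ (x.sum fun s c => c • δ s) = ∑ i ∈ J, x (brS i (1:G) i) := by
        rw [hFJ, ContinuousLinearMap.sum_apply]
        exact Finset.sum_congr rfl fun i _ => hf1 _ x
      rw [happly, hδ.norm_eq]
      calc ‖∑ i ∈ J, x (brS i (1:G) i)‖ ≤ ∑ i ∈ J, ‖x (brS i (1:G) i)‖ :=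
            norm_sum_le _ _
        _ = ∑ s ∈ J.image (fun i : I => (brS i (1:G) i : Brandt G I)), ‖x s‖ := by
            rw [Finset.sum_image (fun a _ b _ hab => brS_inj hab)]
        _ ≤ ∑ s ∈ J.image (fun i : I => (brS i (1:G) i : Brandt G I)) ∪ x.support, ‖x s‖ :=
            Finset.sum_le_sum_of_subset_of_nonneg Finset.subset_union_left
              (fun s _ _ => norm_nonneg _)
        _ = ∑ s ∈ x.support, ‖x s‖ := by
            refine (Finset.sum_subset Finset.subset_union_right fun s _ hs => ?_).symm
            simp [Finsupp.notMem_support_iff.mp hs]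
        _ = x.sum fun _ c => ‖c‖ := rfl
    have hval : e α FJ = (J.card : ℂ) * γ := by
      rw [hFJ, map_sum]
      rw [Finset.sum_congr rfl fun i _ => hcenter i, Finset.sum_const, nsmul_eq_mul]
    have h1 : ‖e α FJ‖ ≤ ‖e α‖ := by
      calc ‖e α FJ‖ ≤ ‖e α‖ * ‖FJ‖ := ContinuousLinearMap.le_opNorm _ _
        _ ≤ ‖e α‖ * 1 := mul_le_mul_of_nonneg_left hFJnorm (norm_nonneg (e α : StrongDual ℂ (StrongDual ℂ B)))
        _ = ‖e α‖ := mul_one _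
    rw [hval] at h1
    rw [norm_mul, Complex.norm_natCast] at h1
    calc (J.card : ℝ) * (1/2) ≤ (J.card : ℝ) * ‖γ‖ :=
          mul_le_mul_of_nonneg_left hγhalf (Nat.cast_nonneg _)
      _ ≤ ‖e α‖ := h1
  obtain ⟨n, hn⟩ := exists_nat_gt ‖e α‖
  obtain ⟨J, hJ⟩ := Infinite.exists_subset_card_eq I (2 * n + 2)
  have := hbound J
  rw [hJ] at this
  push_cast at this
  linarith
end Forward

/-- **Theorem 2.7.** Let `S = M⁰(G, I)` be the Brandt semigroup over a group `G` with
non-empty index set `I`.  Then `ℓ¹(S)` (realized by a Banach algebra `B` with point masses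
`δ`) has an ultra central approximate identity if and only if `I` is finite. -/
theorem l1_brandt_hasUltraCentralApproximateIdentity_iff_finite
    (G : Type v) [Group G] (I : Type v) [Nonempty I]
    (B : Type u) [NonUnitalNormedRing B] [NormedSpace ℂ B]
    [IsScalarTower ℂ B B] [SMulCommClass ℂ B B] [CompleteSpace B]
    (δ : Brandt G I → B) (hδ : IsL1SemigroupAlgebra (Brandt G I) B δ) :
    HasUltraCentralApproximateIdentity B ↔ Finite I := by
  constructor
  · exact fun h => brandt_forward hδ h
  · intro hI
    obtain ⟨E, hE⟩ := brandt_finite_unit hδ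
    refine ⟨PUnit.{u+1}, inferInstance, inferInstance, inferInstance,
      fun _ => NormedSpace.inclusionInDoubleDual ℂ B E, ?_, ?_⟩
    · intro a _
      rw [bidualLSMul_inclusion, bidualRSMul_inclusion, (hE a).2, (hE a).1]
    · intro a
      have hfun : (fun _ : PUnit.{u+1} =>
            bidualRSMul (NormedSpace.inclusionInDoubleDual ℂ B E) a)
          = fun _ => NormedSpace.inclusionInDoubleDual ℂ B a := by
        funext _
        rw [bidualRSMul_inclusion, (hE a).1]
      rw [hfun]
      exact tendsto_const_nhds
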